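/- scc(K_t(2)) is asymptotically equal to t·log₂ t; that is, the ratio scc(K_t(2)) / (t·log₂ t) tends to 1 as t tends to infinity. -/

import Mathlib

open Finset

/-- A clique covering of `G`: a finite family of cliques covering every edge. -/
def IsCliqueCover {V : Type*} (G : SimpleGraph V) (𝒞 : Finset (Finset V)) : Prop :=
  (∀ C ∈ 𝒞, G.IsClique (C : Set V)) ∧
  ∀ u v, G.Adj u v → ∃ C ∈ 𝒞, u ∈ C ∧ v ∈ C

/-- A clique partition of `G`: every edge lies in exactly one clique of the family. -/
def IsCliquePartition {V : Type*} (G : SimpleGraph V) (𝒞 : Finset (Finset V)) : Prop :=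
  (∀ C ∈ 𝒞, G.IsClique (C : Set V)) ∧
  ∀ u v, G.Adj u v → ∃! C, C ∈ 𝒞 ∧ u ∈ C ∧ v ∈ C

/-- The sigma clique cover number: minimum total size of cliques in a clique covering. -/
noncomputable def scc {V : Type*} (G : SimpleGraph V) : ℕ :=
  sInf {k | ∃ 𝒞, IsCliqueCover G 𝒞 ∧ ∑ C ∈ 𝒞, C.card = k}

/-- The sigma clique partition number: minimum total size of cliques in a clique partition. -/
noncomputable def scp {V : Type*} (G : SimpleGraph V) : ℕ :=
  sInf {k | ∃ 𝒞, IsCliquePartition G 𝒞 ∧ ∑ C ∈ 𝒞, C.card = k}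

/-- The clique cover number: minimum number of cliques in a clique covering. -/
noncomputable def cc {V : Type*} (G : SimpleGraph V) : ℕ :=
  sInf {k | ∃ 𝒞, IsCliqueCover G 𝒞 ∧ 𝒞.card = k}

/-- The clique partition number: minimum number of cliques in a clique partition. -/
noncomputable def cp {V : Type*} (G : SimpleGraph V) : ℕ :=
  sInf {k | ∃ 𝒞, IsCliquePartition G 𝒞 ∧ 𝒞.card = k}

/-- `scc'`: the minimum total size of cliques over clique coverings achieving `cc G`. -/
noncomputable def scc' {V : Type*} (G : SimpleGraph V) : ℕ :=
  sInf {k | ∃ 𝒞, IsCliqueCover G 𝒞 ∧ 𝒞.card = cc G ∧ ∑ C ∈ 𝒞, C.card = k}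

/-- The Cocktail party graph `K_t(2)`: the complete graph on `2t` vertices minus a perfect
matching. Vertices are pairs `(i, a)`; two vertices are adjacent iff their first
coordinates differ. -/
def cocktailParty (t : ℕ) : SimpleGraph (Fin t × Fin 2) where
  Adj u v := u.1 ≠ v.1
  symm := ⟨fun _ _ h => h.symm⟩
  loopless := ⟨fun _ h => h rfl⟩

lemma sum_image_le' {α β : Type*} [DecidableEq α] [DecidableEq β] (s : Finset α) (f : α → β)
    (g : β → ℕ) : ∑ b ∈ s.image f, g b ≤ ∑ a ∈ s, g (f a) := by
  induction s using Finset.induction with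
  | empty => simp
  | insert a s ha ih =>
    rw [Finset.image_insert, Finset.sum_insert ha]
    by_cases h : f a ∈ s.image f
    · rw [Finset.insert_eq_self.2 h]; omega
    · rw [Finset.sum_insert h]; omega

lemma upper_aux (t m : ℕ) (hm : 1 ≤ m) (ht : t ≤ (2*m-1).choose (m-1)) :
    ∃ 𝒞, IsCliqueCover (cocktailParty t) 𝒞 ∧ ∑ C ∈ 𝒞, C.card ≤ 2*m*t := by
  have h2m : 0 < 2*m := by omega
  set z : Fin (2*m) := ⟨0, h2m⟩ with hz
  set F' : Finset (Finset (Fin (2*m))) := (Finset.univ.erase z).powersetCard (m-1) with hF'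
  have hcardF' : F'.card = (2*m-1).choose (m-1) := by
    rw [hF', Finset.card_powersetCard, Finset.card_erase_of_mem (Finset.mem_univ z),
      Finset.card_univ, Fintype.card_fin]
  have hembN : Fintype.card (Fin t) ≤ Fintype.card {s // s ∈ F'} := by
    rw [Fintype.card_fin, Fintype.card_coe, hcardF']; exact ht
  obtain ⟨e⟩ := Function.Embedding.nonempty_of_card_le hembN
  set code : Fin t → Finset (Fin (2*m)) := fun i => insert z (e i : Finset (Fin (2*m)))
    with hcode
  have hmemF' : ∀ i, (e i : Finset (Fin (2*m))) ∈ F' := fun i => (e i).2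
  have hz_not : ∀ i, z ∉ (e i : Finset (Fin (2*m))) := by
    intro i hzz
    exact (Finset.notMem_erase z _) ((Finset.mem_powersetCard.1 (hmemF' i)).1 hzz)
  have hzcode : ∀ i, z ∈ code i := fun i => Finset.mem_insert_self _ _
  have hcard_code : ∀ i, (code i).card = m := by
    intro i
    rw [hcode, Finset.card_insert_of_notMem (hz_not i),
      (Finset.mem_powersetCard.1 (hmemF' i)).2]
    omega
  have hinj : Function.Injective code := by
    intro i j hij
    apply e.injective
    apply Subtype.ext
    have h2 : (code i).erase z = (code j).erase z := by rw [hij]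
    rwa [hcode, Finset.erase_insert (hz_not i), Finset.erase_insert (hz_not j)] at h2
  set bit : Fin t → Fin (2*m) → Fin 2 := fun i j => if j ∈ code i then 1 else 0 with hbit
  have key : ∀ i i' : Fin t, i ≠ i' → ∀ a a' : Fin 2, ∃ j, bit i j = a ∧ bit i' j = a' := by
    intro i i' hne a a'
    have hns : ∀ p q : Fin t, p ≠ q → ∃ j, j ∈ code p ∧ j ∉ code q := by
      intro p q hpq
      refine Finset.not_subset.1 (fun hsub => hpq (hinj (Finset.eq_of_subset_of_card_le hsub ?_)))
      rw [hcard_code, hcard_code]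
    fin_cases a <;> fin_cases a'
    · -- (0,0)
      have hinter : 1 ≤ (code i ∩ code i').card :=
        Finset.card_pos.2 ⟨z, Finset.mem_inter.2 ⟨hzcode i, hzcode i'⟩⟩
      have huc : (code i ∪ code i').card + (code i ∩ code i').card = m + m :=
        by rw [Finset.card_union_add_card_inter, hcard_code, hcard_code]
      have hlt : (code i ∪ code i') ≠ Finset.univ := by
        intro hequ
        have : (Finset.univ : Finset (Fin (2*m))).card = 2*m := by
          rw [Finset.card_univ, Fintype.card_fin]
        rw [hequ, this] at huc
        omega
      obtain ⟨j, -, hj⟩ := Finset.exists_of_ssubset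
        (Finset.ssubset_univ_iff.2 hlt)
      rw [Finset.mem_union] at hj
      push_neg at hj
      exact ⟨j, by simp [hbit, hj.1], by simp [hbit, hj.2]⟩
    · -- (0,1)
      obtain ⟨j, hj1, hj2⟩ := hns i' i (Ne.symm hne)
      exact ⟨j, by simp [hbit, hj2], by simp [hbit, hj1]⟩
    · -- (1,0)
      obtain ⟨j, hj1, hj2⟩ := hns i i' hne
      exact ⟨j, by simp [hbit, hj1], by simp [hbit, hj2]⟩
    · -- (1,1)
      exact ⟨z, by simp [hbit, hzcode i], by simp [hbit, hzcode i']⟩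
  set Cj : Fin (2*m) → Finset (Fin t × Fin 2) :=
    fun j => Finset.univ.image (fun i => (i, bit i j)) with hCj
  refine ⟨Finset.univ.image Cj, ⟨?_, ?_⟩, ?_⟩
  · intro C hC
    obtain ⟨j, -, rfl⟩ := Finset.mem_image.1 hC
    intro u hu v hv huv
    rw [Finset.mem_coe, hCj] at hu hv
    obtain ⟨i, -, rfl⟩ := Finset.mem_image.1 hu
    obtain ⟨i', -, rfl⟩ := Finset.mem_image.1 hv
    show i ≠ i'
    intro h
    subst h
    exact huv rfl
  · rintro ⟨i, a⟩ ⟨i', a'⟩ hadj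
    have hne : i ≠ i' := hadj
    obtain ⟨j, hja, hja'⟩ := key i i' hne a a'
    refine ⟨Cj j, Finset.mem_image_of_mem _ (Finset.mem_univ j), ?_, ?_⟩
    · exact Finset.mem_image.2 ⟨i, Finset.mem_univ i, by rw [hja]⟩
    · exact Finset.mem_image.2 ⟨i', Finset.mem_univ i', by rw [hja']⟩
  · calc ∑ C ∈ Finset.univ.image Cj, C.card ≤ ∑ j : Fin (2*m), (Cj j).card :=
          sum_image_le' _ _ _
      _ = ∑ _j : Fin (2*m), t := by
          refine Finset.sum_congr rfl fun j _ => ?_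
          rw [hCj, Finset.card_image_of_injective _ (fun a b hab => congrArg Prod.fst hab),
            Finset.card_univ, Fintype.card_fin]
      _ = 2*m*t := by simp [mul_comm]

lemma lower_aux (t : ℕ) (ht : 2 ≤ t) (𝒞 : Finset (Finset (Fin t × Fin 2)))
    (h : IsCliqueCover (cocktailParty t) 𝒞) :
    (t : ℝ) * Real.logb 2 t ≤ (∑ C ∈ 𝒞, C.card : ℝ) := by
  classical
  set N := 𝒞.card with hN
  set touched : Fin t → Finset (Finset (Fin t × Fin 2)) :=
    fun i => 𝒞.filter (fun C => (i,0) ∈ C ∨ (i,1) ∈ C) with htouched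
  set d : Fin t → ℕ := fun i => (touched i).card with hd
  -- no clique contains both (i,0) and (i,1)
  have hnotboth : ∀ i : Fin t, ∀ C ∈ 𝒞, ¬((i, (0:Fin 2)) ∈ C ∧ (i, (1:Fin 2)) ∈ C) := by
    rintro i C hC ⟨h0, h1⟩
    have hne : ((i, (0:Fin 2)) : Fin t × Fin 2) ≠ (i, 1) := by simp
    have := h.1 C hC h0 h1 hne
    exact this rfl
  -- Step 1 : ∑ d ≤ ∑ card
  have step1 : ∑ i : Fin t, d i ≤ ∑ C ∈ 𝒞, C.card := by
    have hcardeq : ∀ C : Finset (Fin t × Fin 2), C.card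
        = ∑ v : Fin t × Fin 2, if v ∈ C then 1 else 0 := by
      intro C
      rw [Finset.sum_ite_mem, Finset.univ_inter, Finset.sum_const, smul_eq_mul, mul_one]
    calc ∑ i : Fin t, d i
        ≤ ∑ i : Fin t, ((𝒞.filter (fun C => (i,0) ∈ C)).card
            + (𝒞.filter (fun C => (i,1) ∈ C)).card) := by
          refine Finset.sum_le_sum fun i _ => ?_
          rw [hd]
          simp only [htouched]
          rw [Finset.filter_or]
          exact Finset.card_union_le _ _
      _ = ∑ v : Fin t × Fin 2, (𝒞.filter (fun C => v ∈ C)).card := by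
          rw [Fintype.sum_prod_type]
          refine Finset.sum_congr rfl fun i _ => ?_
          rw [Fin.sum_univ_two]
      _ = ∑ v : Fin t × Fin 2, ∑ C ∈ 𝒞, (if v ∈ C then 1 else 0) := by
          refine Finset.sum_congr rfl fun v _ => ?_
          rw [Finset.card_filter]
      _ = ∑ C ∈ 𝒞, ∑ v : Fin t × Fin 2, (if v ∈ C then 1 else 0) := Finset.sum_comm
      _ = ∑ C ∈ 𝒞, C.card := by
          refine Finset.sum_congr rfl fun C _ => (hcardeq C).symm
  -- Step 2 : counting
  set S : Fin t → Finset (Finset (Finset (Fin t × Fin 2))) :=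
    fun i => 𝒞.powerset.filter
      (fun T => (∀ C ∈ 𝒞, (i, (0:Fin 2)) ∈ C → C ∉ T) ∧ (∀ C ∈ 𝒞, (i, (1:Fin 2)) ∈ C → C ∈ T))
      with hS
  have hdleN : ∀ i, d i ≤ N := fun i => Finset.card_filter_le _ _
  have hScard : ∀ i : Fin t, 2 ^ (N - d i) ≤ (S i).card := by
    intro i
    set forced : Finset (Finset (Fin t × Fin 2)) := 𝒞.filter (fun C => (i,(1:Fin 2)) ∈ C)
      with hforced
    have hforced_sub : forced ⊆ touched i := by
      intro C hC
      rw [hforced, Finset.mem_filter] at hC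
      rw [htouched]
      exact Finset.mem_filter.2 ⟨hC.1, Or.inr hC.2⟩
    have htouched_sub : touched i ⊆ 𝒞 := Finset.filter_subset _ _
    have hP : ((𝒞 \ touched i).powerset).card = 2 ^ (N - d i) := by
      rw [Finset.card_powerset, Finset.card_sdiff_of_subset htouched_sub]
    rw [← hP]
    apply Finset.card_le_card_of_injOn (fun U => U ∪ forced)
    · intro U hU
      rw [Finset.mem_coe, Finset.mem_powerset] at hU
      rw [Finset.mem_coe, hS, Finset.mem_filter]
      refine ⟨Finset.mem_powerset.2 ?_, ?_, ?_⟩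
      · exact Finset.union_subset ((hU.trans (Finset.sdiff_subset)))
          (Finset.filter_subset _ _)
      · intro C hC h0 hmem
        rcases Finset.mem_union.1 hmem with hu | hf
        · have : C ∈ 𝒞 \ touched i := hU hu
          rw [Finset.mem_sdiff] at this
          exact this.2 (Finset.mem_filter.2 ⟨hC, Or.inl h0⟩)
        · rw [hforced, Finset.mem_filter] at hf
          exact hnotboth i C hC ⟨h0, hf.2⟩
      · intro C hC h1
        exact Finset.mem_union_right _ (Finset.mem_filter.2 ⟨hC, h1⟩)
    · intro U1 hU1 U2 hU2 heq
      simp only [Finset.mem_coe, Finset.mem_powerset] at hU1 hU2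
      have key : ∀ U : Finset (Finset (Fin t × Fin 2)), U ⊆ 𝒞 \ touched i →
          (U ∪ forced) \ touched i = U := by
        intro U hU'
        rw [Finset.union_sdiff_distrib]
        have h1 : forced \ touched i = ∅ := Finset.sdiff_eq_empty_iff_subset.2 hforced_sub
        have h2 : U \ touched i = U := by
          apply Finset.sdiff_eq_self_of_disjoint
          rw [Finset.disjoint_left]
          intro a ha
          exact (Finset.mem_sdiff.1 (hU' ha)).2
        rw [h1, h2, Finset.union_empty]
      have heq' : U1 ∪ forced = U2 ∪ forced := heq
      rw [← key U1 hU1, ← key U2 hU2, heq']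
  -- disjointness
  have hdisj : ∀ i j : Fin t, i ≠ j → Disjoint (S i) (S j) := by
    intro i j hij
    rw [Finset.disjoint_left]
    intro T hTi hTj
    obtain ⟨C, hC, h0, h1⟩ := h.2 (i, (0:Fin 2)) (j, (1:Fin 2)) hij
    rw [hS, Finset.mem_filter] at hTi hTj
    exact (hTi.2.1 C hC h0) (hTj.2.2 C hC h1)
  have hsumS : ∑ i : Fin t, (S i).card ≤ 2 ^ N := by
    rw [← Finset.card_biUnion (fun i _ => fun j _ hij => hdisj i j hij)]
    calc (Finset.univ.biUnion S).card ≤ 𝒞.powerset.card := by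
          apply Finset.card_le_card
          intro T hT
          obtain ⟨i, -, hTi⟩ := Finset.mem_biUnion.1 hT
          exact Finset.mem_of_mem_filter T hTi
      _ = 2 ^ N := Finset.card_powerset 𝒞
  have hcount : ∑ i : Fin t, 2 ^ (N - d i) ≤ 2 ^ N :=
    le_trans (Finset.sum_le_sum fun i _ => hScard i) hsumS
  -- Step 3 : real inequality ∑ 2^{-d i} ≤ 1
  have hreal : ∑ i : Fin t, ((2:ℝ) ^ (d i))⁻¹ ≤ 1 := by
    have hcast : ∑ i : Fin t, ((2:ℝ) ^ (N - d i)) ≤ (2:ℝ) ^ N := by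
      have := hcount
      calc ∑ i : Fin t, ((2:ℝ) ^ (N - d i)) = ((∑ i : Fin t, 2 ^ (N - d i) : ℕ) : ℝ) := by
            push_cast; ring
        _ ≤ ((2^N : ℕ) : ℝ) := by exact_mod_cast hcount
        _ = (2:ℝ)^N := by push_cast; ring
    have h2N : (0:ℝ) < 2 ^ N := by positivity
    rw [← div_le_one h2N] at *
    rw [Finset.sum_div] at hcast
    calc ∑ i : Fin t, ((2:ℝ) ^ (d i))⁻¹ = ∑ i : Fin t, (2:ℝ) ^ (N - d i) / 2 ^ N := by
          refine Finset.sum_congr rfl fun i _ => ?_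
          rw [eq_div_iff (ne_of_gt h2N), inv_mul_eq_div,
            div_eq_iff (ne_of_gt (by positivity : (0:ℝ) < 2 ^ (d i))), ← pow_add]
          congr 1
          have := hdleN i
          omega
      _ ≤ 1 := hcast
  -- Step 4 : AM-GM
  have ht0 : (0:ℝ) < t := by positivity
  have hw : ∑ _i : Fin t, (1:ℝ)/t = 1 := by
    rw [Finset.sum_const, Finset.card_univ, Fintype.card_fin, nsmul_eq_mul]
    field_simp
  have hgm := Real.geom_mean_le_arith_mean_weighted Finset.univ (fun _ => (1:ℝ)/t)
    (fun i => ((2:ℝ) ^ (d i))⁻¹) (fun i _ => by positivity) hw (fun i _ => by positivity)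
  have hprod : ∏ i : Fin t, (((2:ℝ) ^ (d i))⁻¹) ^ ((1:ℝ)/t)
      = (2:ℝ) ^ ((-(∑ i : Fin t, (d i : ℝ)))/t) := by
    calc ∏ i : Fin t, (((2:ℝ) ^ (d i))⁻¹) ^ ((1:ℝ)/t)
        = ∏ i : Fin t, Real.exp (Real.log 2 * (-(d i : ℝ) * (1/t))) := by
          refine Finset.prod_congr rfl fun i _ => ?_
          rw [← Real.rpow_natCast 2 (d i), ← Real.rpow_neg (by norm_num),
            ← Real.rpow_mul (by norm_num), Real.rpow_def_of_pos (by norm_num)]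
      _ = Real.exp (∑ i : Fin t, Real.log 2 * (-(d i : ℝ) * (1/t))) := (Real.exp_sum _ _).symm
      _ = (2:ℝ) ^ ((-(∑ i : Fin t, (d i : ℝ)))/t) := by
          rw [Real.rpow_def_of_pos (by norm_num : (0:ℝ) < 2)]
          congr 1
          rw [← Finset.mul_sum]
          congr 1
          rw [neg_div, Finset.sum_div, ← Finset.sum_neg_distrib]
          exact Finset.sum_congr rfl fun i _ => by ring
  rw [hprod] at hgm
  have hrhs : ∑ i : Fin t, ((1:ℝ)/t) * ((2:ℝ) ^ (d i))⁻¹ ≤ 1/t := by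
    rw [← Finset.mul_sum]
    calc (1/(t:ℝ)) * ∑ i : Fin t, ((2:ℝ) ^ (d i))⁻¹ ≤ (1/t) * 1 := by
          apply mul_le_mul_of_nonneg_left hreal (by positivity)
      _ = 1/t := mul_one _
  have hfin : (2:ℝ) ^ ((-(∑ i : Fin t, (d i : ℝ)))/t) ≤ 1/t := le_trans hgm hrhs
  have hlog : (-(∑ i : Fin t, (d i : ℝ)))/t ≤ -Real.logb 2 t := by
    have h1 : Real.logb 2 ((2:ℝ) ^ ((-(∑ i : Fin t, (d i : ℝ)))/t)) ≤ Real.logb 2 (1/(t:ℝ)) :=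
      (Real.logb_le_logb one_lt_two (Real.rpow_pos_of_pos (by norm_num) _) (by positivity)).2 hfin
    rwa [Real.logb_rpow (by norm_num) (by norm_num), one_div, Real.logb_inv] at h1
  have hA : (t:ℝ) * Real.logb 2 t ≤ ∑ i : Fin t, (d i : ℝ) := by
    rw [neg_div, neg_le_neg_iff, le_div_iff₀ ht0] at hlog
    linarith
  calc (t:ℝ) * Real.logb 2 t ≤ ∑ i : Fin t, (d i : ℝ) := hA
    _ = ((∑ i : Fin t, d i : ℕ) : ℝ) := by push_cast; ring
    _ ≤ ((∑ C ∈ 𝒞, C.card : ℕ) : ℝ) := by exact_mod_cast step1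
    _ = ∑ C ∈ 𝒞, ((C.card : ℕ) : ℝ) := by push_cast; ring

lemma choose_big (t m : ℕ) (hm : 1 ≤ m) (h4 : 4 * m * t ≤ 4 ^ m) :
    t ≤ (2*m-1).choose (m-1) := by
  have hrel : 2 * m * ((2*m-1).choose (m-1)) = (2*m).choose m * m := by
    have := Nat.add_one_mul_choose_eq (2*m-1) (m-1)
    have h1 : 2*m-1+1 = 2*m := by omega
    have h2 : m-1+1 = m := by omega
    rw [h1, h2] at this
    exact this
  have hcb : 4 ^ m ≤ 2 * m * Nat.centralBinom m :=
    Nat.four_pow_le_two_mul_self_mul_centralBinom m (by omega)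
  have hcb' : (2*m).choose m = Nat.centralBinom m := rfl
  -- 2 * t ≤ centralBinom m
  have h2t : 2 * t ≤ Nat.centralBinom m := by
    have : 2 * m * (2 * t) ≤ 2 * m * Nat.centralBinom m := by
      calc 2 * m * (2 * t) = 4 * m * t := by ring
        _ ≤ 4 ^ m := h4
        _ ≤ 2 * m * Nat.centralBinom m := hcb
    exact Nat.le_of_mul_le_mul_left this (by omega)
  -- centralBinom m = 2 * choose
  have hcc : Nat.centralBinom m = 2 * ((2*m-1).choose (m-1)) := by
    have : (2 * ((2*m-1).choose (m-1))) * m = Nat.centralBinom m * m := by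
      rw [Nat.centralBinom, ← hrel]; ring
    exact (Nat.eq_of_mul_eq_mul_right (by omega) this).symm
  omega

noncomputable def mfun (t : ℕ) : ℕ :=
  ⌈Real.logb 2 t / 2 + Real.logb 2 (Real.logb 2 t) + 2⌉₊

/-- `scc(K_t(2)) ∼ t·log₂ t`: the ratio `scc(K_t(2)) / (t·log₂ t)` tends to `1`. -/
theorem stmt_16 :
    Filter.Tendsto (fun t : ℕ => (scc (cocktailParty t) : ℝ) / (t * Real.logb 2 t))
      Filter.atTop (nhds 1) := by
  classical
  set L : ℕ → ℝ := fun t => Real.logb 2 t with hLdef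
  -- the upper comparison function
  set g : ℕ → ℝ := fun t => 1 + (2 * Real.logb 2 (L t) + 6) / L t with hgdef
  have hLtend : Filter.Tendsto L Filter.atTop Filter.atTop :=
    (Real.tendsto_logb_atTop one_lt_two).comp tendsto_natCast_atTop_atTop
  have hgtend : Filter.Tendsto g Filter.atTop (nhds 1) := by
    have h1 : Filter.Tendsto (fun y : ℝ => Real.log y / y) Filter.atTop (nhds 0) :=
      Real.isLittleO_log_id_atTop.tendsto_div_nhds_zero
    have h2 : Filter.Tendsto (fun y : ℝ => (2 * Real.logb 2 y + 6) / y)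
        Filter.atTop (nhds 0) := by
      have heq : (fun y : ℝ => (2 * Real.logb 2 y + 6) / y)
          = fun y => (2 / Real.log 2) * (Real.log y / y) + 6 * y⁻¹ := by
        funext y
        rw [Real.logb]
        ring
      rw [heq]
      have := (h1.const_mul (2 / Real.log 2)).add (tendsto_inv_atTop_zero.const_mul 6)
      simpa using this
    have h3 := h2.comp hLtend
    have : Filter.Tendsto (fun t : ℕ => 1 + (2 * Real.logb 2 (L t) + 6) / L t)
        Filter.atTop (nhds (1 + 0)) := Filter.Tendsto.const_add 1 h3
    simpa [hgdef] using this
  -- eventual bounds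
  have hbounds : ∀ᶠ t : ℕ in Filter.atTop,
      1 ≤ (scc (cocktailParty t) : ℝ) / (t * Real.logb 2 t) ∧
      (scc (cocktailParty t) : ℝ) / (t * Real.logb 2 t) ≤ g t := by
    rw [Filter.eventually_atTop]
    refine ⟨16, fun t htt => ?_⟩
    have ht16 : (16:ℝ) ≤ (t:ℝ) := by exact_mod_cast htt
    have htpos : (0:ℝ) < t := by linarith
    have hL4 : 4 ≤ L t := by
      have h16 : Real.logb 2 (16:ℝ) = 4 := by
        rw [show (16:ℝ) = 2 ^ (4:ℝ) by norm_num [Real.rpow_natCast]]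
        exact Real.logb_rpow (by norm_num) (by norm_num)
      calc (4:ℝ) = Real.logb 2 16 := h16.symm
        _ ≤ L t := Real.logb_le_logb_of_le one_lt_two (by norm_num) ht16
    have hLpos : 0 < L t := by linarith
    have hlogL2 : 2 ≤ Real.logb 2 (L t) := by
      have h4' : Real.logb 2 (4:ℝ) = 2 := by
        rw [show (4:ℝ) = 2 ^ (2:ℝ) by norm_num [Real.rpow_natCast]]
        exact Real.logb_rpow (by norm_num) (by norm_num)
      calc (2:ℝ) = Real.logb 2 4 := h4'.symm
        _ ≤ Real.logb 2 (L t) := Real.logb_le_logb_of_le one_lt_two (by norm_num) hL4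
    have hlogLle : Real.logb 2 (L t) ≤ 2 * L t := by
      have hlog2 : (1/2:ℝ) ≤ Real.log 2 := by
        have := Real.log_two_gt_d9
        linarith
      have hlogL : Real.log (L t) ≤ L t := by
        have := Real.log_le_sub_one_of_pos hLpos
        linarith
      have hlogLnn : 0 ≤ Real.log (L t) := Real.log_nonneg (by linarith)
      calc Real.logb 2 (L t) = Real.log (L t) / Real.log 2 := rfl
        _ ≤ Real.log (L t) / (1/2) := by
          apply div_le_div_of_nonneg_left hlogLnn (by norm_num) hlog2
        _ = 2 * Real.log (L t) := by ring
        _ ≤ 2 * L t := by linarith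
    set m := mfun t with hmdef
    have hmge : L t / 2 + Real.logb 2 (L t) + 2 ≤ (m:ℝ) := Nat.le_ceil _
    have hmle : (m:ℝ) ≤ L t / 2 + Real.logb 2 (L t) + 3 := by
      have h0 : (0:ℝ) ≤ L t / 2 + Real.logb 2 (L t) + 2 := by linarith
      have := Nat.ceil_lt_add_one h0
      have h2 : (m:ℝ) < L t / 2 + Real.logb 2 (L t) + 2 + 1 := this
      linarith
    have hm1 : 1 ≤ m := by
      by_contra hc
      push_neg at hc
      interval_cases m
      simp only [Nat.cast_zero] at hmge
      linarith
    -- main numeric inequality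
    have hfour : 4 * m * t ≤ 4 ^ m := by
      have hreal : (4:ℝ) * m * t ≤ 4 ^ m := by
        have hpow : ((4:ℝ)) ^ m = (2:ℝ) ^ ((2 * m : ℕ) : ℝ) := by
          rw [Real.rpow_natCast]
          rw [pow_mul]
          norm_num
        have hexp : L t + 2 * Real.logb 2 (L t) + 4 ≤ ((2 * m : ℕ) : ℝ) := by
          push_cast
          linarith
        have hmono : (2:ℝ) ^ (L t + 2 * Real.logb 2 (L t) + 4)
            ≤ (2:ℝ) ^ ((2 * m : ℕ) : ℝ) :=
          Real.rpow_le_rpow_of_exponent_le one_le_two hexp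
        have hval : (2:ℝ) ^ (L t + 2 * Real.logb 2 (L t) + 4) = t * (L t * L t * 16) := by
          rw [show L t + 2 * Real.logb 2 (L t) + 4
              = L t + (Real.logb 2 (L t) + (Real.logb 2 (L t) + 4)) by ring]
          rw [Real.rpow_add two_pos, Real.rpow_add two_pos, Real.rpow_add two_pos]
          rw [Real.rpow_logb two_pos (by norm_num) htpos,
            Real.rpow_logb two_pos (by norm_num) hLpos]
          rw [show (4:ℝ) = ((4:ℕ):ℝ) by norm_num, Real.rpow_natCast]
          ring
        have hcmp : (4:ℝ) * m * t ≤ t * (L t * L t * 16) := by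
          have hLL : 16 * L t ≤ 16 * (L t * L t) / 4 := by nlinarith [hL4]
          have h1 : 4 * (m:ℝ) ≤ 16 * (L t * L t) := by nlinarith [hmle, hlogLle, hL4]
          calc (4:ℝ) * m * t = (4 * (m:ℝ)) * t := by ring
            _ ≤ (16 * (L t * L t)) * t := mul_le_mul_of_nonneg_right h1 (le_of_lt htpos)
            _ = t * (L t * L t * 16) := by ring
        calc (4:ℝ) * m * t ≤ t * (L t * L t * 16) := hcmp
          _ = (2:ℝ) ^ (L t + 2 * Real.logb 2 (L t) + 4) := hval.symm
          _ ≤ (2:ℝ) ^ ((2 * m : ℕ) : ℝ) := hmono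
          _ = (4:ℝ) ^ m := hpow.symm
      have : ((4 * m * t : ℕ) : ℝ) ≤ ((4 ^ m : ℕ) : ℝ) := by
        push_cast
        convert hreal using 2
      exact_mod_cast this
    obtain ⟨𝒞, hcov, hsum⟩ := upper_aux t m hm1 (choose_big t m hm1 hfour)
    -- upper bound on scc
    have hsccle : scc (cocktailParty t) ≤ 2 * m * t := by
      have hmem : (∑ C ∈ 𝒞, C.card) ∈
          {k | ∃ 𝒟, IsCliqueCover (cocktailParty t) 𝒟 ∧ ∑ C ∈ 𝒟, C.card = k} :=
        ⟨𝒞, hcov, rfl⟩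
      exact le_trans (Nat.sInf_le hmem) hsum
    -- lower bound on scc
    have hsccge : (t:ℝ) * Real.logb 2 t ≤ (scc (cocktailParty t) : ℝ) := by
      have hne : {k | ∃ 𝒟, IsCliqueCover (cocktailParty t) 𝒟 ∧ ∑ C ∈ 𝒟, C.card = k}.Nonempty :=
        ⟨_, 𝒞, hcov, rfl⟩
      obtain ⟨𝒟, hcov', hsum'⟩ := Nat.sInf_mem hne
      rw [scc, ← hsum']
      have := lower_aux t (by omega) 𝒟 hcov'
      calc (t:ℝ) * Real.logb 2 t ≤ (∑ C ∈ 𝒟, (C.card:ℝ)) := this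
        _ = ((∑ C ∈ 𝒟, C.card : ℕ) : ℝ) := by push_cast; ring
    have htL : (0:ℝ) < t * Real.logb 2 t := by
      apply mul_pos htpos hLpos
    constructor
    · rw [le_div_iff₀ htL]
      simpa using hsccge
    · rw [div_le_iff₀ htL]
      have hcast : (scc (cocktailParty t) : ℝ) ≤ 2 * m * t := by
        exact_mod_cast hsccle
      have hgval : g t * (t * Real.logb 2 t)
          = t * L t + t * (2 * Real.logb 2 (L t) + 6) := by
        rw [hgdef]
        field_simp
        ring
      calc (scc (cocktailParty t) : ℝ) ≤ 2 * m * t := hcast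
        _ ≤ t * L t + t * (2 * Real.logb 2 (L t) + 6) := by nlinarith [hmle, htpos]
        _ = g t * (t * Real.logb 2 t) := hgval.symm
    -- done
  exact tendsto_of_tendsto_of_tendsto_of_le_of_le'
    tendsto_const_nhds hgtend
    (hbounds.mono fun t h => h.1) (hbounds.mono fun t h => h.2)
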